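/- Let (B, A, e, l, i) be a cleft extension of abelian categories with enough projectives. Then for every projective object P' of B one has pd_A i(P') ≤ pd_A H(P') + 1; hence p_B ≤ n_H + 1 where p_B = sup{pd_A i(P') : P' projective in B} and n_H = sup{pd_A H(B) : B ∈ B}. -/

import Mathlib

open CategoryTheory CategoryTheory.Limits

universe v u v' u'

/-- A cleft extension of abelian categories: `e` is faithful exact, `(l, e)` is an adjoint
pair, and `e ∘ i` is naturally isomorphic to the identity of `B`. -/
structure CleftExt (B : Type u) (A : Type u') [Category.{v} B] [Category.{v'} A]
    [Abelian B] [Abelian A] where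
  i : B ⥤ A
  e : A ⥤ B
  l : B ⥤ A
  e_faithful : e.Faithful
  e_preservesFiniteLimits : PreservesFiniteLimits e
  e_preservesFiniteColimits : PreservesFiniteColimits e
  adj : l ⊣ e
  iso : i ⋙ e ≅ 𝟭 B

/-- `pdLE n M` : the object `M` admits a projective resolution of length at most `n`. -/
def pdLE {C : Type u} [Category.{v} C] [Abelian C] : ℕ → C → Prop
  | 0, M => Projective M
  | (n+1), M => Projective M ∨ ∃ (P : C) (f : P ⟶ M), Epi f ∧ Projective P ∧ pdLE n (kernel f)

/-- The projective dimension of an object of an abelian category, valued in `ℕ∞`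
(`⊤` if the object has no finite projective resolution). -/
noncomputable def pdim {C : Type u} [Category.{v} C] [Abelian C] (M : C) : ℕ∞ :=
  sInf {n : ℕ∞ | ∃ m : ℕ, n = (m : ℕ∞) ∧ pdLE m M}

/-- The finitistic dimension of an abelian category with enough projectives: the supremum of
the projective dimensions of the objects of finite projective dimension. -/
noncomputable def findimCat (C : Type u) [Category.{v} C] [Abelian C] : ℕ∞ :=
  ⨆ (M : C) (_ : pdim M ≠ ⊤), pdim M

variable {B : Type u} {A : Type u'} [Category.{v} B] [Category.{v'} A] [Abelian B] [Abelian A]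

/-- The functor `G` associated to a cleft extension, `G(X) = Ker ε_X`. -/
noncomputable def CleftExt.G (C : CleftExt B A) (X : A) : A :=
  kernel (C.adj.counit.app X)

/-- The functor `H` associated to a cleft extension, `H(Y) = G(i(Y))`. -/
noncomputable def CleftExt.H (C : CleftExt B A) (Y : B) : A :=
  C.G (C.i.obj Y)

/-- `p_A`, the supremum of the projective dimensions of `e(P)` over projectives `P` of `A`. -/
noncomputable def CleftExt.pA (C : CleftExt B A) : ℕ∞ :=
  ⨆ (P : A) (_ : Projective P), pdim (C.e.obj P)

/-- `p_B`, the supremum of the projective dimensions of `i(P')` over projectives `P'` of `B`. -/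
noncomputable def CleftExt.pB (C : CleftExt B A) : ℕ∞ :=
  ⨆ (P : B) (_ : Projective P), pdim (C.i.obj P)

/-- `n_H`, the supremum of the projective dimensions of `H(Y)` over all objects `Y` of `B`. -/
noncomputable def CleftExt.nH (C : CleftExt B A) : ℕ∞ :=
  ⨆ (Y : B), pdim (C.H Y)

/-- `n_G`, the supremum of the projective dimensions of `G(X)` over all objects `X` of `A`. -/
noncomputable def CleftExt.nG (C : CleftExt B A) : ℕ∞ :=
  ⨆ (X : A), pdim (C.G X)

lemma pdim_le_of_pdLE {C : Type u} [Category.{v} C] [Abelian C] {M : C} {m : ℕ}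
    (h : pdLE m M) : pdim M ≤ (m : ℕ∞) :=
  sInf_le ⟨m, rfl, h⟩

lemma pdim_exists {C : Type u} [Category.{v} C] [Abelian C] (M : C) (h : pdim M ≠ ⊤) :
    ∃ m : ℕ, (m : ℕ∞) ≤ pdim M ∧ pdLE m M := by
  have hTne : {n : ℕ∞ | ∃ m : ℕ, n = (m : ℕ∞) ∧ pdLE m M}.Nonempty := by
    rw [Set.nonempty_iff_ne_empty]
    intro he
    exact h (by simp [pdim, he])
  have hSne : {m : ℕ | pdLE m M}.Nonempty := by
    obtain ⟨n, m, rfl, hm⟩ := hTne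
    exact ⟨m, hm⟩
  refine ⟨sInf {m : ℕ | pdLE m M}, ?_, Nat.sInf_mem hSne⟩
  apply le_sInf
  rintro n ⟨k, rfl, hk⟩
  exact_mod_cast Nat.sInf_le (show k ∈ {m : ℕ | pdLE m M} from hk)

lemma cleftExt_key (C : CleftExt B A) (P' : B) (hP' : Projective P') :
    pdim (C.i.obj P') ≤ pdim (C.H P') + 1 := by
  by_cases h : pdim (C.H P') = ⊤
  · simp [h]
  obtain ⟨m, hm, hpd⟩ := pdim_exists _ h
  haveI := C.e_faithful
  haveI := C.e_preservesFiniteColimits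
  have hepi : Epi (C.adj.counit.app (C.i.obj P')) := by
    apply C.e.epi_of_epi_map
    have : IsSplitEpi (C.e.map (C.adj.counit.app (C.i.obj P'))) :=
      ⟨⟨⟨C.adj.unit.app _, C.adj.right_triangle_components _⟩⟩⟩
    infer_instance
  have hprojB : Projective (C.e.obj (C.i.obj P')) :=
    Projective.of_iso (C.iso.app P').symm hP'
  have hproj : Projective (C.l.obj (C.e.obj (C.i.obj P'))) :=
    C.adj.map_projective _ hprojB
  have step : pdLE (m + 1) (C.i.obj P') :=
    Or.inr ⟨C.l.obj (C.e.obj (C.i.obj P')), C.adj.counit.app (C.i.obj P'), hepi, hproj, hpd⟩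
  calc pdim (C.i.obj P') ≤ ((m + 1 : ℕ) : ℕ∞) := pdim_le_of_pdLE step
    _ = (m : ℕ∞) + 1 := by push_cast; rfl
    _ ≤ pdim (C.H P') + 1 := add_le_add_left hm 1

/-- for a cleft extension `(B, A, e, l, i)` of abelian categories with enough
projectives, `pd_A i(P') ≤ pd_A H(P') + 1` for every projective object `P'` of `B`; hence
`p_B ≤ n_H + 1`. -/
theorem cleftExt_pB_le_nH_add_one (C : CleftExt B A)
    [EnoughProjectives A] [EnoughProjectives B] :
    (∀ P' : B, Projective P' → pdim (C.i.obj P') ≤ pdim (C.H P') + 1) ∧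
    C.pB ≤ C.nH + 1 := by
  refine ⟨fun P' hP' => cleftExt_key C P' hP', ?_⟩
  apply iSup_le
  intro P
  apply iSup_le
  intro hP
  calc pdim (C.i.obj P) ≤ pdim (C.H P) + 1 := cleftExt_key C P hP
    _ ≤ C.nH + 1 := add_le_add_left (le_iSup (fun Y => pdim (C.H Y)) P) 1
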